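/- Let 0 < δ ≤ 1 and ε > 0. Suppose p ≥ ((4+ε)/δ²)·(log k)/(k−1) and k ≥ 20. Consider a random graph on a vertex set K of size k where each unordered pair of distinct vertices is independently joined by an edge with probability p. Then with probability at least 1 − e·k^{−ε/2}, every subset C ⊂ K with 1 ≤ |C| ≤ k−1 satisfies cut_K(C) ≥ (1−δ)·p·(k−1), where cut_K(C) denotes the number of edges between C and K\C. -/

import Mathlib

set_option maxHeartbeats 2000000

open MeasureTheory ProbabilityTheory

/-!
STATEMENT 10 (Lower bound of internal cut). Let `0 < δ ≤ 1`, `ε > 0`,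
`p ≥ ((4+ε)/δ²)·(log k)/(k−1)` and `k ≥ 20`.  For a random graph on `Fin k` whose
edge indicators (for distinct unordered pairs) are independent `Bernoulli(p)`, with
probability at least `1 − e·k^{−ε/2}` every subset `C` with `1 ≤ |C| ≤ k−1`
(equivalently, `C` nonempty and `C ≠ univ`) satisfies `cut_K(C) ≥ (1−δ)·p·(k−1)`.
-/

/-- Number of edges of the graph with adjacency `A` between `C` and its complement. -/
def cutK {k : ℕ} (A : Fin k → Fin k → Bool) (C : Finset (Fin k)) : ℕ :=
  (Finset.univ.filter (fun e : Fin k × Fin k =>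
    e.1 < e.2 ∧ A e.1 e.2 = true ∧
      ((e.1 ∈ C ∧ e.2 ∉ C) ∨ (e.1 ∉ C ∧ e.2 ∈ C)))).card

abbrev Pairs (k : ℕ) := {e : Fin k × Fin k // e.1 < e.2}

def crossP {k : ℕ} (C : Finset (Fin k)) (e : Pairs k) : Prop :=
  (e.1.1 ∈ C ∧ e.1.2 ∉ C) ∨ (e.1.1 ∉ C ∧ e.1.2 ∈ C)

instance {k : ℕ} (C : Finset (Fin k)) : DecidablePred (crossP C) := by
  intro e; unfold crossP; infer_instance

lemma cutK_cast {k : ℕ} (A : Fin k → Fin k → Bool) (C : Finset (Fin k)) :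
    (cutK A C : ℝ) = ∑ e ∈ Finset.univ.filter (crossP C),
      (if A e.1.1 e.1.2 = true then (1:ℝ) else 0) := by
  classical
  rw [cutK, Finset.card_filter]
  rw [Finset.sum_filter]
  push_cast
  have hsub : ∀ f : Fin k × Fin k → ℝ,
      ∑ e ∈ Finset.univ.filter (fun e : Fin k × Fin k => e.1 < e.2), f e
        = ∑ e : Pairs k, f e.1 := by
    intro f
    exact Finset.sum_subtype _ (by intro x; simp) f
  have : (∑ e : Fin k × Fin k,
      if e.1 < e.2 ∧ A e.1 e.2 = true ∧ ((e.1 ∈ C ∧ e.2 ∉ C) ∨ (e.1 ∉ C ∧ e.2 ∈ C))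
      then (1:ℝ) else 0)
      = ∑ e ∈ Finset.univ.filter (fun e : Fin k × Fin k => e.1 < e.2),
        (if A e.1 e.2 = true ∧ ((e.1 ∈ C ∧ e.2 ∉ C) ∨ (e.1 ∉ C ∧ e.2 ∈ C)) then (1:ℝ) else 0) := by
    rw [Finset.sum_filter]
    apply Finset.sum_congr rfl
    intro e _
    by_cases h : e.1 < e.2 <;> simp [h, ite_and]
  rw [this, hsub]
  apply Finset.sum_congr rfl
  intro e _
  by_cases h1 : crossP C e
  · have h1' := h1; unfold crossP at h1'
    by_cases h2 : A e.1.1 e.1.2 = true <;> simp [h1, h1', h2]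
  · have h1' := h1; unfold crossP at h1'
    simp [h1, h1']

lemma card_cross_ge {k : ℕ} (C : Finset (Fin k)) :
    C.card * (k - C.card) ≤ (Finset.univ.filter (crossP C)).card := by
  classical
  have hcompl : (Finset.univ \ C).card = k - C.card := by
    rw [Finset.card_sdiff_of_subset (Finset.subset_univ C)]
    simp
  have hprod : (C ×ˢ (Finset.univ \ C)).card = C.card * (k - C.card) := by
    rw [Finset.card_product, hcompl]
  rw [← hprod]
  apply Finset.card_le_card_of_surjOn
    (fun e : Pairs k => if e.1.1 ∈ C then (e.1.1, e.1.2) else (e.1.2, e.1.1))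
  rintro ⟨a, b⟩ hab
  simp only [Finset.coe_product, Set.mem_prod, Finset.mem_coe, Finset.mem_sdiff,
    Finset.mem_univ, true_and] at hab
  obtain ⟨ha, hb⟩ := hab
  have hne : a ≠ b := fun h => hb (h ▸ ha)
  rcases lt_or_gt_of_ne hne with h | h
  · refine ⟨⟨(a, b), h⟩, ?_, ?_⟩
    · simp only [Finset.coe_filter, Set.mem_setOf_eq, Finset.mem_univ, true_and]
      left; exact ⟨ha, hb⟩
    · simp [ha]
  · refine ⟨⟨(b, a), h⟩, ?_, ?_⟩
    · simp only [Finset.coe_filter, Set.mem_setOf_eq, Finset.mem_univ, true_and]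
      right; exact ⟨hb, ha⟩
    · simp [hb, ha]

lemma aux_log (u : ℝ) (h0 : 0 < u) (h1 : u < 1) : -(u * Real.log u) ≤ (1 - u^2)/2 := by
  have hx : 0 < -Real.log u := by
    have := Real.log_neg h0 h1
    linarith
  have hs := (Real.self_lt_sinh_iff).2 hx
  rw [Real.sinh_eq] at hs
  rw [Real.exp_neg, neg_neg, Real.exp_log h0] at hs
  have h2 : -Real.log u < (u⁻¹ - u)/2 := by linarith [hs]
  have := mul_lt_mul_of_pos_left h2 h0
  have hu : u * u⁻¹ = 1 := mul_inv_cancel₀ (ne_of_gt h0)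
  nlinarith

lemma exponent_bound (kR m δ ε p : ℝ) (hk : 20 ≤ kR) (hm1 : 1 ≤ m) (hm2 : 2*m ≤ kR)
    (hm3 : 0 ≤ (m-1)*(2*m-3)) (hδ0 : 0 < δ) (hδ1 : δ < 1) (hε : 0 < ε) (hp0 : 0 ≤ p)
    (hp : (4+ε)/δ^2 * (Real.log kR/(kR-1)) ≤ p) :
    (1-δ)*p*(kR-1) * (-Real.log (1-δ)) - p*δ*(m*(kR-m)) ≤ -(m+1+ε/2) * Real.log kR := by
  have hL : 0 < Real.log kR := Real.log_pos (by linarith)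
  have hQ : (0:ℝ) < 2*m - 1 := by linarith
  have hkR1 : (0:ℝ) < kR - 1 := by linarith
  have hpg : (4+ε) * Real.log kR ≤ p * δ^2 * (kR-1) := by
    rw [div_mul_div_comm, div_le_iff₀ (by positivity)] at hp
    nlinarith [hp]
  have hA : -((1-δ) * Real.log (1-δ)) ≤ δ - δ^2/2 := by
    have := aux_log (1-δ) (by linarith) (by linarith)
    nlinarith [this]
  have h1 : (1-δ)*p*(kR-1) * (-Real.log (1-δ)) ≤ p*(kR-1)*(δ - δ^2/2) := by
    have hnn : 0 ≤ p*(kR-1) := by positivity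
    calc (1-δ)*p*(kR-1) * (-Real.log (1-δ))
        = p*(kR-1) * (-((1-δ) * Real.log (1-δ))) := by ring
      _ ≤ p*(kR-1)*(δ - δ^2/2) := by
          exact mul_le_mul_of_nonneg_left hA hnn
  have key1 : p*δ*(kR-1)*m^2 ≤ p*δ*(m*(kR-m))*(2*m-1) := by
    have hexp : p*δ*(m*(kR-m))*(2*m-1) - p*δ*(kR-1)*m^2 = p*δ*(m*((m-1)*(kR-2*m))) := by ring
    nlinarith [mul_nonneg (mul_nonneg (mul_nonneg hp0 hδ0.le) (by linarith : (0:ℝ) ≤ m))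
      (mul_nonneg (by linarith : (0:ℝ) ≤ m-1) (by linarith : (0:ℝ) ≤ kR-2*m))]
  rw [← mul_le_mul_iff_right₀ hQ]
  have step2 : (2*m-1) * ((1-δ)*p*(kR-1) * (-Real.log (1-δ)) - p*δ*(m*(kR-m)))
      ≤ p*(kR-1)*((δ - δ^2/2)*(2*m-1) - δ*m^2) := by nlinarith [h1, key1]
  have step3 : p*(kR-1)*((δ - δ^2/2)*(2*m-1) - δ*m^2)
      ≤ -(p * δ^2 * (kR-1)) * ((m-1)^2 + (2*m-1)/2) := by
    have hδδ : δ^2 ≤ δ := by nlinarith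
    have hd : δ^2*(m-1)^2 ≤ δ*(m-1)^2 :=
      mul_le_mul_of_nonneg_right hδδ (sq_nonneg (m-1))
    nlinarith [mul_le_mul_of_nonneg_left hd (by positivity : (0:ℝ) ≤ p*(kR-1))]
  have step4 : -(p * δ^2 * (kR-1)) * ((m-1)^2 + (2*m-1)/2)
      ≤ -((4+ε) * Real.log kR) * ((m-1)^2 + (2*m-1)/2) := by
    have hbr : (0:ℝ) ≤ (m-1)^2 + (2*m-1)/2 := by positivity
    have := mul_le_mul_of_nonneg_right hpg hbr
    linarith [this]
  have step5 : -((4+ε) * Real.log kR) * ((m-1)^2 + (2*m-1)/2)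
      ≤ (2*m-1) * (-(m+1+ε/2) * Real.log kR) := by
    have hcoef : (m+1+ε/2)*(2*m-1) ≤ (4+ε) * ((m-1)^2 + (2*m-1)/2) := by
      nlinarith [sq_nonneg (m-1), hm3, hε.le]
    have := mul_le_mul_of_nonneg_right hcoef hL.le
    linarith [this]
  linarith [step2, step3, step4, step5]

lemma mgf_bernoulli {Ω : Type} [MeasurableSpace Ω] (μ : Measure Ω) [IsProbabilityMeasure μ]
    (B : Ω → Bool) (hB : Measurable B) (p s : ℝ) (hp0 : 0 ≤ p)
    (hber : μ {ω | B ω = true} = ENNReal.ofReal p) :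
    mgf (fun ω => if B ω then (1:ℝ) else 0) μ s = 1 - p + p * Real.exp s := by
  have hAset : MeasurableSet {ω | B ω = true} := hB (measurableSet_singleton true)
  have hfun : (fun ω => Real.exp (s * (if B ω then (1:ℝ) else 0)))
      = fun ω => Set.indicator {ω | B ω = true} (fun _ => Real.exp s - 1) ω + 1 := by
    funext ω
    by_cases h : B ω = true
    · simp [h, Set.indicator_of_mem, Set.mem_setOf_eq]
    · simp [h, Set.indicator_of_notMem, Set.mem_setOf_eq]
  rw [mgf, hfun]
  rw [integral_add ((integrable_const _).indicator hAset) (integrable_const 1)]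
  rw [integral_indicator_const _ hAset, integral_const, probReal_univ, measureReal_def, hber,
    ENNReal.toReal_ofReal hp0]
  simp only [smul_eq_mul, ENNReal.toReal_one, one_smul]
  ring

lemma sum_bound (k : ℕ) (ε : ℝ) (hk : 20 ≤ k) :
    ∑ C ∈ (Finset.univ.filter (fun C : Finset (Fin k) => C.Nonempty ∧ C ≠ Finset.univ)),
      ((k:ℝ) ^ (-((min C.card (k - C.card) : ℕ) : ℝ)) * (k:ℝ) ^ (-(1+ε/2)))
      ≤ Real.exp 1 * (k:ℝ) ^ (-(ε/2)) := by
  classical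
  have hk0 : (0:ℝ) < k := by
    have : (20:ℝ) ≤ k := by exact_mod_cast hk
    linarith
  set f : Finset (Fin k) → ℝ :=
    fun C => (k:ℝ) ^ (-((min C.card (k - C.card) : ℕ) : ℝ)) * (k:ℝ) ^ (-(1+ε/2)) with hf
  have hfnn : ∀ C, 0 ≤ f C := by
    intro C; rw [hf]; positivity
  have hsub : (Finset.univ.filter (fun C : Finset (Fin k) => C.Nonempty ∧ C ≠ Finset.univ))
      ⊆ (Finset.Ico 1 k).biUnion (fun c => Finset.powersetCard c Finset.univ) := by
    intro C hC
    rw [Finset.mem_filter] at hC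
    obtain ⟨-, hne, hnu⟩ := hC
    rw [Finset.mem_biUnion]
    refine ⟨C.card, ?_, ?_⟩
    · rw [Finset.mem_Ico]
      constructor
      · exact Finset.card_pos.mpr hne
      · have := C.card_lt_iff_ne_univ.mpr hnu
        simpa using this
    · simp [Finset.mem_powersetCard_univ]
  have h1 : ∑ C ∈ (Finset.univ.filter (fun C : Finset (Fin k) => C.Nonempty ∧ C ≠ Finset.univ)),
      f C ≤ ∑ C ∈ (Finset.Ico 1 k).biUnion (fun c => Finset.powersetCard c Finset.univ), f C :=
    Finset.sum_le_sum_of_subset_of_nonneg hsub (fun C _ _ => hfnn C)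
  have hdisj : ∀ c1 ∈ Finset.Ico 1 k, ∀ c2 ∈ Finset.Ico 1 k, c1 ≠ c2 →
      Disjoint (Finset.powersetCard c1 (Finset.univ : Finset (Fin k)))
        (Finset.powersetCard c2 Finset.univ) := by
    intro c1 _ c2 _ hne
    rw [Finset.disjoint_left]
    intro C h1' h2'
    rw [Finset.mem_powersetCard_univ] at h1' h2'
    exact hne (h1' ▸ h2')
  rw [Finset.sum_biUnion hdisj] at h1
  have h2 : ∀ c ∈ Finset.Ico 1 k,
      ∑ C ∈ Finset.powersetCard c (Finset.univ : Finset (Fin k)), f C ≤ (k:ℝ) ^ (-(1+ε/2)) := by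
    intro c hc
    rw [Finset.mem_Ico] at hc
    have hsum : ∑ C ∈ Finset.powersetCard c (Finset.univ : Finset (Fin k)), f C
        = (k.choose c : ℝ) * ((k:ℝ) ^ (-((min c (k - c) : ℕ) : ℝ)) * (k:ℝ) ^ (-(1+ε/2))) := by
      rw [Finset.sum_congr rfl (fun C hC => ?_), Finset.sum_const, nsmul_eq_mul,
        Finset.card_powersetCard, Finset.card_univ, Fintype.card_fin]
      rw [Finset.mem_powersetCard_univ] at hC
      subst hC; rfl
    rw [hsum]
    have hchoose : (k.choose c : ℝ) ≤ (k:ℝ) ^ ((min c (k - c) : ℕ) : ℝ) := by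
      rw [Real.rpow_natCast]
      have : k.choose c ≤ k ^ (min c (k-c)) := by
        rcases le_total c (k - c) with h | h
        · rw [min_eq_left h]; exact Nat.choose_le_pow k c
        · rw [min_eq_right h, ← Nat.choose_symm hc.2.le]
          exact Nat.choose_le_pow k (k - c)
      exact_mod_cast this
    calc (k.choose c : ℝ) * ((k:ℝ) ^ (-((min c (k - c) : ℕ) : ℝ)) * (k:ℝ) ^ (-(1+ε/2)))
        ≤ (k:ℝ) ^ ((min c (k - c) : ℕ) : ℝ) * ((k:ℝ) ^ (-((min c (k - c) : ℕ) : ℝ)) * (k:ℝ) ^ (-(1+ε/2))) := by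
          apply mul_le_mul_of_nonneg_right hchoose
          positivity
      _ = (k:ℝ) ^ (-(1+ε/2)) := by
          rw [← mul_assoc, ← Real.rpow_add hk0, add_neg_cancel, Real.rpow_zero, one_mul]
  have h3 : ∑ c ∈ Finset.Ico 1 k,
      (∑ C ∈ Finset.powersetCard c (Finset.univ : Finset (Fin k)), f C)
      ≤ (k:ℝ) * (k:ℝ) ^ (-(1+ε/2)) := by
    calc ∑ c ∈ Finset.Ico 1 k, (∑ C ∈ Finset.powersetCard c (Finset.univ : Finset (Fin k)), f C)
        ≤ ∑ _c ∈ Finset.Ico 1 k, (k:ℝ) ^ (-(1+ε/2)) := Finset.sum_le_sum h2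
      _ = ((k - 1 : ℕ) : ℝ) * (k:ℝ) ^ (-(1+ε/2)) := by
          rw [Finset.sum_const, Nat.card_Ico, nsmul_eq_mul]
      _ ≤ (k:ℝ) * (k:ℝ) ^ (-(1+ε/2)) := by
          apply mul_le_mul_of_nonneg_right _ (by positivity)
          exact_mod_cast Nat.cast_le.mpr (Nat.sub_le k 1)
  have h4 : (k:ℝ) * (k:ℝ) ^ (-(1+ε/2)) ≤ Real.exp 1 * (k:ℝ) ^ (-(ε/2)) := by
    have heq : (k:ℝ) * (k:ℝ) ^ (-(1+ε/2)) = (k:ℝ) ^ (-(ε/2)) := by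
      calc (k:ℝ) * (k:ℝ) ^ (-(1+ε/2)) = (k:ℝ) ^ (1:ℝ) * (k:ℝ) ^ (-(1+ε/2)) := by
            rw [Real.rpow_one]
        _ = (k:ℝ) ^ ((1:ℝ) + -(1+ε/2)) := (Real.rpow_add hk0 _ _).symm
        _ = (k:ℝ) ^ (-(ε/2)) := by congr 1; ring
    rw [heq]
    nlinarith [Real.one_le_exp (zero_le_one (α := ℝ)), Real.rpow_nonneg hk0.le (-(ε/2))]
  linarith [h1, h3, h4]

theorem stmt10 (k : ℕ) (hk : 20 ≤ k) (δ ε p : ℝ)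
    (hδ0 : 0 < δ) (hδ1 : δ ≤ 1) (hε : 0 < ε)
    (hp : ((4 + ε) / δ ^ 2) * (Real.log k / ((k : ℝ) - 1)) ≤ p) (hp1 : p ≤ 1)
    (Ω : Type) (_mΩ : MeasurableSpace Ω) (μ : Measure Ω) [IsProbabilityMeasure μ]
    (X : Fin k → Fin k → Ω → Bool)
    (hmeas : ∀ i j, Measurable (X i j))
    (hindep : iIndepFun
      (fun e : {e : Fin k × Fin k // e.1 < e.2} => X e.1.1 e.1.2) μ)
    (hber : ∀ i j : Fin k, i < j → μ {ω | X i j ω = true} = ENNReal.ofReal p) :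
    ENNReal.ofReal (1 - Real.exp 1 * (k : ℝ) ^ (-(ε / 2))) ≤
      μ {ω | ∀ C : Finset (Fin k), C.Nonempty → C ≠ Finset.univ →
        (1 - δ) * p * ((k : ℝ) - 1) ≤ (cutK (fun i j => X i j ω) C : ℝ)} := by
  classical
  have hkR : (20:ℝ) ≤ (k:ℝ) := by exact_mod_cast hk
  have hk0 : (0:ℝ) < k := by linarith
  have hk1 : (0:ℝ) < (k:ℝ) - 1 := by linarith
  have hlogk : 0 < Real.log k := Real.log_pos (by linarith)
  have hp0 : 0 < p := lt_of_lt_of_le (by positivity) hp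
  have hexpk : 0 ≤ Real.exp 1 * (k:ℝ) ^ (-(ε/2)) := by positivity
  set t : ℝ := (1 - δ) * p * ((k:ℝ) - 1) with ht
  rcases eq_or_lt_of_le hδ1 with hδeq | hδlt
  · -- δ = 1 : threshold is 0
    have hset : {ω | ∀ C : Finset (Fin k), C.Nonempty → C ≠ Finset.univ →
        (1 - δ) * p * ((k : ℝ) - 1) ≤ (cutK (fun i j => X i j ω) C : ℝ)} = Set.univ := by
      apply Set.eq_univ_of_forall
      intro ω C _ _
      rw [← hδeq]
      simp only [sub_self, zero_mul]
      positivity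
    rw [hset, measure_univ]
    exact ENNReal.ofReal_le_one.mpr (by linarith)
  · -- main case : δ < 1
    set s : ℝ := Real.log (1 - δ) with hsdef
    have h1δ : (0:ℝ) < 1 - δ := by linarith
    have hs : s ≤ 0 := Real.log_nonpos (by linarith) (by linarith)
    have hes : Real.exp s = 1 - δ := Real.exp_log h1δ
    set Y : Pairs k → Ω → ℝ := fun e ω => if X e.1.1 e.1.2 ω then 1 else 0 with hY
    have hYmeas : ∀ e : Pairs k, Measurable (Y e) := by
      intro e
      exact Measurable.ite (hmeas e.1.1 e.1.2 (measurableSet_singleton true))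
        measurable_const measurable_const
    have hYindep : iIndepFun Y μ := by
      have := hindep.comp (fun _ (b : Bool) => if b then (1:ℝ) else 0)
        (fun _ => measurable_from_top)
      exact this
    have hY01 : ∀ e ω, 0 ≤ Y e ω := by
      intro e ω; rw [hY]; dsimp only; split <;> norm_num
    set 𝒞 : Finset (Finset (Fin k)) :=
      Finset.univ.filter (fun C : Finset (Fin k) => C.Nonempty ∧ C ≠ Finset.univ) with h𝒞
    set Bad : Finset (Fin k) → Set Ω :=
      fun C => {ω | (cutK (fun i j => X i j ω) C : ℝ) < t} with hBad
    set f : Finset (Fin k) → ℝ :=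
      fun C => (k:ℝ) ^ (-((min C.card (k - C.card) : ℕ) : ℝ)) * (k:ℝ) ^ (-(1+ε/2)) with hfdef
    have key : ∀ C ∈ 𝒞, MeasurableSet (Bad C) ∧ μ (Bad C) ≤ ENNReal.ofReal (f C) := by
      intro C hC
      rw [h𝒞, Finset.mem_filter] at hC
      obtain ⟨-, hne, hnu⟩ := hC
      have hc1 : 1 ≤ C.card := Finset.card_pos.mpr hne
      have hck : C.card < k := by
        have := C.card_lt_iff_ne_univ.mpr hnu
        simpa using this
      set c := C.card with hc
      set Efin : Finset (Pairs k) := Finset.univ.filter (crossP C) with hEfin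
      set S : Ω → ℝ := fun ω => ∑ e ∈ Efin, Y e ω with hS
      have hcut : ∀ ω, (cutK (fun i j => X i j ω) C : ℝ) = S ω := by
        intro ω
        rw [cutK_cast]
      have hSmeas : Measurable S :=
        Finset.measurable_sum Efin (fun e _ => hYmeas e)
      have hSnn : ∀ ω, 0 ≤ S ω := fun ω =>
        Finset.sum_nonneg (fun e _ => hY01 e ω)
      have hmeasBad : MeasurableSet (Bad C) := by
        have : Bad C = S ⁻¹' (Set.Iio t) := by
          ext ω; simp [hBad, hcut ω]
        rw [this]
        exact hSmeas measurableSet_Iio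
      refine ⟨hmeasBad, ?_⟩
      -- Chernoff
      have hint : Integrable (fun ω => Real.exp (s * S ω)) μ := by
        apply Integrable.mono' (integrable_const (1:ℝ))
          (((hSmeas.const_mul s).exp).aestronglyMeasurable)
        apply Filter.Eventually.of_forall
        intro ω
        rw [Real.norm_eq_abs, abs_of_pos (Real.exp_pos _)]
        exact Real.exp_le_one_iff.mpr (mul_nonpos_of_nonpos_of_nonneg hs (hSnn ω))
      have hch := measure_le_le_exp_mul_mgf (μ := μ) (X := S) (t := s) t hs hint
      have hmgf : mgf S μ s = (1 - p * δ) ^ Efin.card := by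
        have hfuneq : S = ∑ e ∈ Efin, Y e := by
          funext ω; rw [hS]; rw [Finset.sum_apply]
        rw [hfuneq, hYindep.mgf_sum hYmeas]
        have hone : ∀ e ∈ Efin, mgf (Y e) μ s = 1 - p + p * Real.exp s := by
          intro e _
          exact mgf_bernoulli μ _ (hmeas e.1.1 e.1.2) p s hp0.le (hber e.1.1 e.1.2 e.2)
        rw [Finset.prod_congr rfl hone, Finset.prod_const]
        congr 1
        rw [hes]; ring
      have hpδ : 0 ≤ p * δ := by positivity
      have hpδ1 : p * δ ≤ 1 := by nlinarith
      have hbase : (0:ℝ) ≤ 1 - p * δ := by linarith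
      have hbexp : 1 - p * δ ≤ Real.exp (-(p * δ)) := by
        have := Real.add_one_le_exp (-(p * δ))
        linarith
      have hpow : (1 - p * δ) ^ Efin.card ≤ Real.exp (-(p * δ) * Efin.card) := by
        calc (1 - p * δ) ^ Efin.card ≤ Real.exp (-(p * δ)) ^ Efin.card :=
              pow_le_pow_left₀ hbase hbexp _
          _ = Real.exp (-(p * δ) * Efin.card) := by
              rw [← Real.exp_nat_mul]; ring_nf
      -- cardinality lower bound
      have hnineq : (c * (k - c) : ℕ) ≤ Efin.card := card_cross_ge C
      have hcard : Real.exp (-(p * δ) * Efin.card) ≤ Real.exp (-(p * δ) * (c * (k - c) : ℕ)) := by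
        apply Real.exp_le_exp.mpr
        have : ((c * (k - c) : ℕ) : ℝ) ≤ (Efin.card : ℝ) := by exact_mod_cast hnineq
        nlinarith [this, hpδ]
      -- set up m
      set mN : ℕ := min c (k - c) with hmN
      have hmc : c * (k - c) = mN * (k - mN) := by
        rcases le_total c (k - c) with h | h
        · rw [hmN, min_eq_left h]
        · rw [hmN, min_eq_right h, Nat.sub_sub_self hck.le]
          ring
      have hmle : mN ≤ k := le_trans (min_le_left _ _) hck.le
      have hcastm : ((mN * (k - mN) : ℕ) : ℝ) = (mN : ℝ) * ((k:ℝ) - (mN:ℝ)) := by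
        push_cast [Nat.cast_sub hmle]
        ring
      have hm1 : (1:ℝ) ≤ (mN : ℝ) := by
        have : 1 ≤ mN := by
          rw [hmN]
          exact le_min hc1 (by omega)
        exact_mod_cast this
      have hm2 : 2 * (mN : ℝ) ≤ (k : ℝ) := by
        have : 2 * mN ≤ k := by
          have h1' : mN ≤ c := min_le_left _ _
          have h2' : mN ≤ k - c := min_le_right _ _
          omega
        exact_mod_cast this
      have hm3 : 0 ≤ ((mN:ℝ) - 1) * (2 * (mN:ℝ) - 3) := by
        have : mN = 1 ∨ 2 ≤ mN := by omega
        rcases this with h | h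
        · rw [h]; norm_num
        · have : (2:ℝ) ≤ (mN:ℝ) := by exact_mod_cast h
          nlinarith
      -- exponent bound
      have hexpb := exponent_bound (k:ℝ) (mN:ℝ) δ ε p hkR hm1 hm2 hm3 hδ0 hδlt hε hp0.le hp
      -- combine
      have hfinal : (μ (Bad C)).toReal ≤ f C := by
        have hsub2 : Bad C ⊆ {ω | S ω ≤ t} := by
          intro ω hω
          rw [hBad, Set.mem_setOf_eq, hcut ω] at hω
          exact le_of_lt hω
        have hm0 : (μ (Bad C)).toReal ≤ (μ {ω | S ω ≤ t}).toReal :=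
          ENNReal.toReal_mono (measure_ne_top μ _) (measure_mono hsub2)
        have hchain : Real.exp (-s * t) * mgf S μ s ≤ f C := by
          rw [hmgf]
          calc Real.exp (-s * t) * (1 - p * δ) ^ Efin.card
              ≤ Real.exp (-s * t) * Real.exp (-(p * δ) * (c * (k - c) : ℕ)) := by
                apply mul_le_mul_of_nonneg_left (le_trans hpow hcard) (Real.exp_pos _).le
            _ = Real.exp (-s * t + -(p * δ) * (c * (k - c) : ℕ)) := by
                rw [← Real.exp_add]
            _ ≤ Real.exp (-((mN:ℝ)+1+ε/2) * Real.log k) := by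
                apply Real.exp_le_exp.mpr
                have heq2 : -s * t + -(p * δ) * ((c * (k - c) : ℕ) : ℝ)
                    = (1-δ)*p*((k:ℝ)-1) * (-Real.log (1-δ)) - p*δ*((mN:ℝ)*((k:ℝ)-(mN:ℝ))) := by
                  rw [ht, hsdef]
                  rw [show ((c * (k - c) : ℕ) : ℝ) = (mN : ℝ) * ((k:ℝ) - (mN:ℝ)) by
                    rw [← hcastm, hmc]]
                  ring
                rw [heq2]
                exact hexpb
            _ = f C := by
                rw [hfdef]
                dsimp only
                rw [Real.rpow_def_of_pos hk0, Real.rpow_def_of_pos hk0, ← Real.exp_add]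
                congr 1
                rw [hmN, hc]
                ring
        exact le_trans hm0 (le_trans hch hchain)
      rw [ENNReal.le_ofReal_iff_toReal_le (measure_ne_top μ _) (by rw [hfdef]; positivity)]
      exact hfinal
    -- union bound
    set U : Set Ω := ⋃ C ∈ 𝒞, Bad C with hU
    have hUmeas : MeasurableSet U := by
      apply MeasurableSet.biUnion (Finset.countable_toSet 𝒞)
      intro C hC
      exact (key C hC).1
    have hUb : μ U ≤ ENNReal.ofReal (Real.exp 1 * (k:ℝ) ^ (-(ε/2))) := by
      calc μ U ≤ ∑ C ∈ 𝒞, μ (Bad C) := measure_biUnion_finset_le 𝒞 Bad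
        _ ≤ ∑ C ∈ 𝒞, ENNReal.ofReal (f C) := Finset.sum_le_sum (fun C hC => (key C hC).2)
        _ = ENNReal.ofReal (∑ C ∈ 𝒞, f C) := by
            rw [ENNReal.ofReal_sum_of_nonneg (fun C _ => by rw [hfdef]; positivity)]
        _ ≤ ENNReal.ofReal (Real.exp 1 * (k:ℝ) ^ (-(ε/2))) :=
            ENNReal.ofReal_le_ofReal (sum_bound k ε hk)
    have hGsub : Uᶜ ⊆ {ω | ∀ C : Finset (Fin k), C.Nonempty → C ≠ Finset.univ →
        (1 - δ) * p * ((k : ℝ) - 1) ≤ (cutK (fun i j => X i j ω) C : ℝ)} := by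
      intro ω hω C hne hnu
      have hCmem : C ∈ 𝒞 := by
        rw [h𝒞, Finset.mem_filter]
        exact ⟨Finset.mem_univ _, hne, hnu⟩
      have : ω ∉ Bad C := by
        intro hbad
        exact hω (Set.mem_biUnion hCmem hbad)
      rw [hBad, Set.mem_setOf_eq, not_lt] at this
      exact this
    calc ENNReal.ofReal (1 - Real.exp 1 * (k : ℝ) ^ (-(ε / 2)))
        = 1 - ENNReal.ofReal (Real.exp 1 * (k : ℝ) ^ (-(ε / 2))) := by
          rw [ENNReal.ofReal_sub _ hexpk, ENNReal.ofReal_one]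
      _ ≤ 1 - μ U := tsub_le_tsub_left hUb 1
      _ = μ Uᶜ := (prob_compl_eq_one_sub hUmeas).symm
      _ ≤ μ _ := measure_mono hGsub
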